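/- For a finite MDP with discount γ ∈ [0,1), arbitrary bounded function f: S → R, policy π, and transition kernel P, the expected discounted return satisfies J(π) = E_{s∼μ}[f(s)] + (1/(1-γ)) E_{s∼d^π, a∼π, s'∼P}[r(s,a,s') + γ f(s') − f(s)]. -/

import Mathlib

/-- Telescoping return identity: for any bounded `f`,
`J(π) = E_{s∼μ}[f(s)] + (1/(1-γ)) E_{s∼d^π, a∼π, s'∼P}[r(s,a,s') + γ f(s') − f(s)]`. -/
theorem stmt1 {S A : Type*} [Fintype S] [Fintype A]
    (γ : ℝ) (hγ0 : 0 ≤ γ) (hγ1 : γ < 1)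
    (π : S → A → ℝ) (hπ0 : ∀ s a, 0 ≤ π s a) (hπ1 : ∀ s, ∑ a, π s a = 1)
    (P : S → A → S → ℝ) (hP0 : ∀ s a s', 0 ≤ P s a s')
    (hP1 : ∀ s a, ∑ s', P s a s' = 1)
    (μ : S → ℝ) (hμ0 : ∀ s, 0 ≤ μ s) (hμ1 : ∑ s, μ s = 1)
    (r : S → A → S → ℝ) (f : S → ℝ)
    (d : S → ℝ)
    (hd : ∀ s, d s = (1 - γ) * μ s + γ * ∑ s₀, ∑ a, d s₀ * π s₀ a * P s₀ a s)
    (J : ℝ)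
    (hJ : J = (1 / (1 - γ)) * ∑ s, ∑ a, ∑ s', d s * π s a * P s a s' * r s a s') :
    J = (∑ s, μ s * f s) +
      (1 / (1 - γ)) *
        ∑ s, ∑ a, ∑ s', d s * π s a * P s a s' * (r s a s' + γ * f s' - f s) := by
  have hne : (1 : ℝ) - γ ≠ 0 := by linarith
  -- key: ∑ s, d s * f s = (1-γ) * ∑ μ f + γ * ∑ s a s', d π P * f s'
  have hdf : ∑ s, d s * f s
      = (1 - γ) * (∑ s, μ s * f s)
        + γ * ∑ s, ∑ a, ∑ s', d s * π s a * P s a s' * f s' := by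
    have : ∑ s, d s * f s
        = ∑ s, ((1 - γ) * μ s + γ * ∑ s₀, ∑ a, d s₀ * π s₀ a * P s₀ a s) * f s := by
      refine Finset.sum_congr rfl fun s _ => by rw [← hd s]
    rw [this]
    have hswap : ∑ s, (∑ s₀, ∑ a, d s₀ * π s₀ a * P s₀ a s) * f s
        = ∑ s₀, ∑ a, ∑ s', d s₀ * π s₀ a * P s₀ a s' * f s' := by
      simp only [Finset.sum_mul]
      rw [Finset.sum_comm]
      refine Finset.sum_congr rfl fun s₀ _ => ?_
      rw [Finset.sum_comm]
    rw [← hswap]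
    simp only [add_mul, Finset.sum_add_distrib]
    congr 1
    · rw [Finset.mul_sum]
      exact Finset.sum_congr rfl fun s _ => by ring
    · rw [Finset.mul_sum]
      exact Finset.sum_congr rfl fun s _ => by ring
  -- ∑ s a s', d π P * f s = ∑ s, d s * f s
  have hfs : ∑ s, ∑ a, ∑ s', d s * π s a * P s a s' * f s = ∑ s, d s * f s := by
    refine Finset.sum_congr rfl fun s _ => ?_
    have : ∑ a, ∑ s', d s * π s a * P s a s' * f s
        = ∑ a, d s * π s a * f s := by
      refine Finset.sum_congr rfl fun a _ => ?_
      rw [← Finset.sum_mul]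
      have : ∑ s', d s * π s a * P s a s' = d s * π s a := by
        rw [← Finset.mul_sum, hP1 s a, mul_one]
      rw [this]
    rw [this]
    have : ∑ a, d s * π s a * f s = (∑ a, π s a) * (d s * f s) := by
      rw [Finset.sum_mul]
      exact Finset.sum_congr rfl fun a _ => by ring
    rw [this, hπ1 s, one_mul]
  have hsplit : ∑ s, ∑ a, ∑ s', d s * π s a * P s a s' * (r s a s' + γ * f s' - f s)
      = (∑ s, ∑ a, ∑ s', d s * π s a * P s a s' * r s a s')
        + γ * (∑ s, ∑ a, ∑ s', d s * π s a * P s a s' * f s')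
        - ∑ s, ∑ a, ∑ s', d s * π s a * P s a s' * f s := by
    simp only [mul_add, mul_sub, Finset.sum_add_distrib, Finset.sum_sub_distrib,
      Finset.mul_sum]
    ring_nf
    rw [add_sub_right_comm]
    congr 1
    refine Finset.sum_congr rfl fun s _ => ?_
    refine Finset.sum_congr rfl fun a _ => ?_
    refine Finset.sum_congr rfl fun s' _ => by ring
  rw [hJ, hsplit, hfs]
  field_simp
  linarith [hdf]
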